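/- Let H be a complex Hilbert space and φ : H →L[ℂ] H a finite potent continuous linear operator with index at most 1 (IsCompl (LinearMap.range φ) (LinearMap.ker φ)). Then a continuous linear operator X : H →L[ℂ] H is a core inverse of φ (i.e. v - φ (X v) ∈ (LinearMap.range φ)ᗮ for all v and LinearMap.range X ≤ LinearMap.range φ) if and only if the following three conditions hold: (I) φ ∘ X ∘ φ = φ, (II) φ ∘ X ∘ X = X, and (III) (φ ∘ X)† = φ ∘ X, where † is the Hilbert adjoint. In particular such an X is unique. -/

import Mathlib

open scoped InnerProductSpace

theorem core_stmt14 {H : Type*} [NormedAddCommGroup H] [InnerProductSpace ℂ H]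
    [CompleteSpace H] (φ : H →L[ℂ] H)
    (hfp : ∃ n : ℕ, FiniteDimensional ℂ (LinearMap.range ((φ ^ n : H →L[ℂ] H) : H →ₗ[ℂ] H)))
    (hidx : IsCompl (LinearMap.range (φ : H →ₗ[ℂ] H)) (LinearMap.ker (φ : H →ₗ[ℂ] H))) :
    (∀ X : H →L[ℂ] H,
      ((∀ v : H, v - φ (X v) ∈ (LinearMap.range (φ : H →ₗ[ℂ] H))ᗮ) ∧
          LinearMap.range (X : H →ₗ[ℂ] H) ≤ LinearMap.range (φ : H →ₗ[ℂ] H)) ↔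
        (φ ∘L X ∘L φ = φ ∧ φ ∘L X ∘L X = X ∧
          ContinuousLinearMap.adjoint (φ ∘L X) = φ ∘L X)) ∧
      ∀ X₁ X₂ : H →L[ℂ] H,
        ((∀ v : H, v - φ (X₁ v) ∈ (LinearMap.range (φ : H →ₗ[ℂ] H))ᗮ) ∧
            LinearMap.range (X₁ : H →ₗ[ℂ] H) ≤ LinearMap.range (φ : H →ₗ[ℂ] H)) →
        ((∀ v : H, v - φ (X₂ v) ∈ (LinearMap.range (φ : H →ₗ[ℂ] H))ᗮ) ∧
            LinearMap.range (X₂ : H →ₗ[ℂ] H) ≤ LinearMap.range (φ : H →ₗ[ℂ] H)) →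
        X₁ = X₂ := by
  set r := LinearMap.range (φ : H →ₗ[ℂ] H) with hrdef
  have hmemr : ∀ v : H, φ v ∈ r := fun v => LinearMap.mem_range.2 ⟨v, rfl⟩
  -- uniqueness of orthogonal decomposition
  have huniq : ∀ (u₁ u₂ v : H), u₁ ∈ r → u₂ ∈ r → v - u₁ ∈ rᗮ → v - u₂ ∈ rᗮ →
      u₁ = u₂ := by
    intro u₁ u₂ v h1 h2 h3 h4
    have hmemo : u₂ - u₁ ∈ rᗮ := by
      have h5 := sub_mem h3 h4
      have h6 : v - u₁ - (v - u₂) = u₂ - u₁ := by abel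
      rwa [h6] at h5
    have : u₂ - u₁ = 0 := by
      have := r.orthogonal_disjoint.le_bot ⟨sub_mem h2 h1, hmemo⟩
      simpa using this
    exact (sub_eq_zero.mp this).symm
  constructor
  · intro X
    constructor
    · rintro ⟨h1, h2⟩
      have hPr : ∀ v : H, φ (X v) ∈ r := fun v => hmemr (X v)
      -- on r, φ ∘ X acts as identity
      have key : ∀ v : H, v ∈ r → φ (X v) = v := by
        intro v hv
        refine huniq (φ (X v)) v v (hPr v) hv (h1 v) ?_
        simp
      refine ⟨?_, ?_, ?_⟩
      · ext v
        exact key (φ v) (hmemr v)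
      · ext v
        exact key (X v) (h2 (LinearMap.mem_range.2 ⟨v, rfl⟩))
      · symm
        rw [ContinuousLinearMap.eq_adjoint_iff]
        intro x y
        have e1 : ⟪φ (X x), y⟫_ℂ = ⟪φ (X x), φ (X y)⟫_ℂ := by
          have h0 : ⟪φ (X x), y - φ (X y)⟫_ℂ = 0 :=
            Submodule.inner_right_of_mem_orthogonal (hPr x) (h1 y)
          rw [inner_sub_right] at h0
          linear_combination h0
        have e2 : ⟪x, φ (X y)⟫_ℂ = ⟪φ (X x), φ (X y)⟫_ℂ := by
          have h0 : ⟪x - φ (X x), φ (X y)⟫_ℂ = 0 :=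
            Submodule.inner_left_of_mem_orthogonal (hPr y) (h1 x)
          rw [inner_sub_left] at h0
          linear_combination h0
        simpa using e1.trans e2.symm
    · rintro ⟨hI, hII, hIII⟩
      have hPφ : ∀ w : H, φ (X (φ w)) = φ w := fun w => congrArg (· w) hI
      constructor
      · intro v
        rw [Submodule.mem_orthogonal]
        rintro u hu
        obtain ⟨w, rfl⟩ := LinearMap.mem_range.1 hu
        rw [inner_sub_right]
        have hadj := ContinuousLinearMap.adjoint_inner_left (φ ∘L X) (φ w) v
        rw [hIII] at hadj
        -- hadj : ⟪(φ ∘L X) (φ w), v⟫ = ⟪φ w, (φ ∘L X) v⟫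
        have : ⟪φ w, φ (X v)⟫_ℂ = ⟪φ w, v⟫_ℂ := by
          have h1 : (φ ∘L X) (φ w) = φ w := hPφ w
          have h2 : (φ ∘L X) v = φ (X v) := rfl
          rw [h1, h2] at hadj
          have := congrArg (starRingEnd ℂ) hadj
          simpa [inner_conj_symm] using this
        exact sub_eq_zero.mpr this.symm
      · rintro u hu
        obtain ⟨v, rfl⟩ := LinearMap.mem_range.1 hu
        have : φ (X (X v)) = X v := congrArg (· v) hII
        exact LinearMap.mem_range.2 ⟨X (X v), this⟩
  · rintro X₁ X₂ ⟨h1, h2⟩ ⟨h3, h4⟩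
    ext v
    have hP : φ (X₁ v) = φ (X₂ v) :=
      huniq _ _ v (hmemr (X₁ v)) (hmemr (X₂ v)) (h1 v) (h3 v)
    have hker : X₁ v - X₂ v ∈ LinearMap.ker (φ : H →ₗ[ℂ] H) := by
      rw [LinearMap.mem_ker]
      have : φ (X₁ v - X₂ v) = φ (X₁ v) - φ (X₂ v) := map_sub φ _ _
      erw [this, hP, sub_self]
    have hr' : X₁ v - X₂ v ∈ r :=
      sub_mem (h2 (LinearMap.mem_range.2 ⟨v, rfl⟩)) (h4 (LinearMap.mem_range.2 ⟨v, rfl⟩))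
    have : X₁ v - X₂ v = 0 := by
      have := hidx.disjoint.le_bot ⟨hr', hker⟩
      simpa using this
    exact sub_eq_zero.mp this
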